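/- Fix n ≥ 4 and let R = ℚ[x,y,z]/I with I generated by x^{n-2} - y², y² - z², (x-1)(y-1), (x-1)(z-1), (y-1)(z-1). Let T = x + y + z - x^{n-2} - 1. Then for every integer i with 1 ≤ i ≤ n-3, one has T · (x^i + (y+z)/2 - 1) = x^{i+1} + (y+z)/2 - 1 in R. Moreover, for i = n-2, T · (x^{n-2} + (y+z)/2 - 1) = x + (y+z)/2 - 1 + (x^{n-2} - 1). -/
import Mathlib

set_option maxHeartbeats 1000000

/-- If `a*b = a+b-1`, then `a^i*b = a^i+b-1` for all `i ≥ 1`. -/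
lemma aux_pow_mul {R : Type*} [CommRing R] (a b : R) (hab : a * b = a + b - 1) :
    ∀ i : ℕ, 1 ≤ i → a ^ i * b = a ^ i + b - 1 := by
  intro i hi
  induction i with
  | zero => omega
  | succ j ih =>
    rcases Nat.eq_zero_or_pos j with hj | hj
    · subst hj; simpa using hab
    · have h := ih hj
      linear_combination a * h + hab

/-- Generic key identity. -/
lemma aux_key {R : Type*} [CommRing R] (a b c L p k : R)
    (hab : a * b = a + b - 1) (hac : a * c = a + c - 1) (hbc : b * c = b + c - 1)
    (hb2 : b ^ 2 = L) (hc2 : c ^ 2 = L)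
    (hpb : p * b = p + b - 1) (hpc : p * c = p + c - 1) (hpL : p * L = p + L - 1)
    (hk : k * 2 = 1) :
    (a + b + c - L - 1) * (p + k * (b + c) - 1) = a * p + k * (b + c) - 1 := by
  have hbL : b * L = b + L - 1 := by linear_combination c * hbc + hbc + (1 - b) * hc2
  have hcL : c * L = c + L - 1 := by linear_combination b * hbc + hbc + (1 - c) * hb2
  linear_combination hpb + hpc - hpL + k * hab + k * hac + k * hb2 + k * hc2
    + 2 * k * hbc - k * hbL - k * hcL + (a - 1) * hk

open MvPolynomial in
theorem monodromy_eps1i (n : ℕ) (hn : 4 ≤ n) :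
    let I : Ideal (MvPolynomial (Fin 3) ℚ) :=
      Ideal.span {X 0 ^ (n - 2) - X 1 ^ 2, X 1 ^ 2 - X 2 ^ 2,
        (X 0 - 1) * (X 1 - 1), (X 0 - 1) * (X 2 - 1), (X 1 - 1) * (X 2 - 1)}
    (∀ i : ℕ, 1 ≤ i → i ≤ n - 3 →
      Ideal.Quotient.mk I (X 0 + X 1 + X 2 - X 0 ^ (n - 2) - 1) *
          Ideal.Quotient.mk I (X 0 ^ i + C (1 / 2 : ℚ) * (X 1 + X 2) - 1)
        = Ideal.Quotient.mk I (X 0 ^ (i + 1) + C (1 / 2 : ℚ) * (X 1 + X 2) - 1)) ∧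
    Ideal.Quotient.mk I (X 0 + X 1 + X 2 - X 0 ^ (n - 2) - 1) *
        Ideal.Quotient.mk I (X 0 ^ (n - 2) + C (1 / 2 : ℚ) * (X 1 + X 2) - 1)
      = Ideal.Quotient.mk I (X 0 + C (1 / 2 : ℚ) * (X 1 + X 2) - 1)
        + (Ideal.Quotient.mk I (X 0 ^ (n - 2)) - 1) := by
  intro I
  have hz : ∀ p ∈ ({X 0 ^ (n - 2) - X 1 ^ 2, X 1 ^ 2 - X 2 ^ 2,
      (X 0 - 1) * (X 1 - 1), (X 0 - 1) * (X 2 - 1),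
      (X 1 - 1) * (X 2 - 1)} : Set (MvPolynomial (Fin 3) ℚ)),
      Ideal.Quotient.mk I p = 0 := fun p hp =>
    Ideal.Quotient.eq_zero_iff_mem.mpr (Ideal.subset_span hp)
  clear_value I
  set f := Ideal.Quotient.mk I with hf
  set a := f (X 0) with ha
  set b := f (X 1) with hb
  set c := f (X 2) with hc
  set k := f (C (1 / 2 : ℚ)) with hkdef
  have hL2 : a ^ (n - 2) = b ^ 2 := by
    have h : f (X 0 ^ (n - 2) - X 1 ^ 2) = 0 := hz _ (by left; rfl)
    simp only [map_sub, map_pow] at h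
    linear_combination h
  have hbc2 : b ^ 2 = c ^ 2 := by
    have h : f (X 1 ^ 2 - X 2 ^ 2) = 0 := hz _ (by right; left; rfl)
    simp only [map_sub, map_pow] at h
    linear_combination h
  have hab : a * b = a + b - 1 := by
    have h : f ((X 0 - 1) * (X 1 - 1)) = 0 := hz _ (by right; right; left; rfl)
    simp only [map_mul, map_sub, map_one] at h
    linear_combination h
  have hac : a * c = a + c - 1 := by
    have h : f ((X 0 - 1) * (X 2 - 1)) = 0 := hz _ (by right; right; right; left; rfl)
    simp only [map_mul, map_sub, map_one] at h
    linear_combination h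
  have hbc : b * c = b + c - 1 := by
    have h : f ((X 1 - 1) * (X 2 - 1)) = 0 := hz _ (by right; right; right; right; rfl)
    simp only [map_mul, map_sub, map_one] at h
    linear_combination h
  have hk : k * 2 = 1 := by
    have hC2 : (C (1 / 2 : ℚ) * 2 : MvPolynomial (Fin 3) ℚ) = 1 := by
      rw [← map_ofNat (C : ℚ →+* MvPolynomial (Fin 3) ℚ) 2, ← C_mul]
      norm_num
    rw [hkdef, show (2 : MvPolynomial (Fin 3) ℚ ⧸ I) = f 2 from (map_ofNat f 2).symm,
      ← map_mul, hC2, map_one]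
  set L := a ^ (n - 2) with hLdef
  have hb2 : b ^ 2 = L := hL2.symm
  have hc2 : c ^ 2 = L := by rw [← hbc2]; exact hb2
  have haL : a * L = a + L - 1 := by
    linear_combination b * hab + hab + (1 - a) * hb2
  have hn2 : 1 ≤ n - 2 := by omega
  have hpowb := aux_pow_mul a b hab
  have hpowc := aux_pow_mul a c hac
  have hpowL := aux_pow_mul a L haL
  constructor
  · intro i hi1 hi2
    have key := aux_key a b c L (a ^ i) k hab hac hbc hb2 hc2
      (hpowb i hi1) (hpowc i hi1) (hpowL i hi1) hk
    simp only [map_add, map_sub, map_mul, map_pow, map_one]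
    rw [← ha, ← hb, ← hc, ← hkdef, ← hLdef]
    calc (a + b + c - L - 1) * (a ^ i + k * (b + c) - 1)
        = a * a ^ i + k * (b + c) - 1 := key
      _ = a ^ (i + 1) + k * (b + c) - 1 := by ring
  · have key := aux_key a b c L L k hab hac hbc hb2 hc2
      (hpowb (n - 2) hn2) (hpowc (n - 2) hn2) (hpowL (n - 2) hn2) hk
    simp only [map_add, map_sub, map_mul, map_pow, map_one]
    rw [← ha, ← hb, ← hc, ← hkdef, ← hLdef]
    calc (a + b + c - L - 1) * (L + k * (b + c) - 1)
        = a * L + k * (b + c) - 1 := key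
      _ = (a + k * (b + c) - 1) + (L - 1) := by linear_combination haL
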